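/- Let a finite group G act on finite sets X, Y, and diagonally on X × Y. Let μ₁, μ₂ be G-invariant probability measures of full support on X and Y. A measure μ in K(μ₁,μ₂) is an extreme point of K(μ₁,μ₂) if and only if its support is a G-good set. -/

import Mathlib

open Finset

def IsGGood (G : Type*) {X Y : Type*} [Group G] [MulAction G X] [MulAction G Y]
    (S : Set (X × Y)) : Prop :=
  (∀ (g : G), ∀ p ∈ S, g • p ∈ S) ∧
  ∀ f : X × Y → ℝ, (∀ (g : G), ∀ p ∈ S, f (g • p) = f p) →
    ∃ u : X → ℝ, ∃ v : Y → ℝ,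
      (∀ (g : G) (x : X), u (g • x) = u x) ∧ (∀ (g : G) (y : Y), v (g • y) = v y) ∧
      ∀ p ∈ S, f p = u p.1 + v p.2

/-- `K (μ₁, μ₂)`: `G`-invariant probability measures on `X × Y` (as weight functions)
with marginals `μ₁`, `μ₂`. -/
def Kset (G : Type*) {X Y : Type*} [Group G] [MulAction G X] [MulAction G Y]
    [Fintype X] [Fintype Y] (μ₁ : X → ℝ) (μ₂ : Y → ℝ) : Set (X × Y → ℝ) :=
  {w | (∀ p, 0 ≤ w p) ∧ (∀ (g : G) (p : X × Y), w (g • p) = w p) ∧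
       (∀ x, ∑ y, w (x, y) = μ₁ x) ∧ (∀ y, ∑ x, w (x, y) = μ₂ y)}

section Aux

variable {G X Y : Type*} [Group G] [Finite G] [Fintype X] [Fintype Y]
    [MulAction G X] [MulAction G Y]

/-- A dual functional on a finite pi type is given by a weight vector. -/
lemma dual_rep {ι : Type*} [Fintype ι] [DecidableEq ι] (φ : Module.Dual ℝ (ι → ℝ)) (h : ι → ℝ) :
    φ h = ∑ i, h i * φ (Pi.single i 1) := by
  have hh : h = ∑ i, h i • (Pi.single i (1:ℝ) : ι → ℝ) := by
    funext q
    rw [Finset.sum_apply]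
    simp [Pi.single_apply]
  conv_lhs => rw [hh]
  rw [map_sum]
  simp [smul_eq_mul]

/-- Good support implies extreme point. -/
lemma good_imp_extreme (μ₁ : X → ℝ) (μ₂ : Y → ℝ)
    (μ : X × Y → ℝ) (hμ : μ ∈ Kset G μ₁ μ₂)
    (hgood : IsGGood G {p | μ p ≠ 0}) :
    μ ∈ Set.extremePoints ℝ (Kset G μ₁ μ₂) := by
  classical
  refine ⟨hμ, ?_⟩
  intro a ha b hb hseg
  obtain ⟨t, s, ht, hs, hts, heq⟩ := hseg
  suffices hab : a = b by
    have hbμ : b = μ := by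
      funext p
      have := congrFun heq p
      simp only [Pi.add_apply, Pi.smul_apply, smul_eq_mul] at this
      rw [hab] at this
      linear_combination this - b p * hts
    exact hab.trans hbμ
  -- ζ = a - b
  have hz0 : ∀ p, μ p = 0 → a p = 0 ∧ b p = 0 := by
    intro p hp
    have := congrFun heq p
    simp only [Pi.add_apply, Pi.smul_apply, smul_eq_mul] at this
    rw [hp] at this
    have h1 := ha.1 p
    have h2 := hb.1 p
    constructor <;> nlinarith
  set F : X × Y → ℝ := fun p => if μ p = 0 then 0 else (a p - b p) / μ p with hF
  obtain ⟨u, v, -, -, huv⟩ := hgood.2 F (by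
    intro g p _
    simp only [hF, hμ.2.1 g p, ha.2.1 g p, hb.2.1 g p])
  have key : ∑ p, (a p - b p) * F p = 0 := by
    have h1 : ∀ p, (a p - b p) * F p = (a p - b p) * u p.1 + (a p - b p) * v p.2 := by
      intro p
      by_cases hp : μ p = 0
      · obtain ⟨e1, e2⟩ := hz0 p hp
        simp [e1, e2]
      · rw [← mul_add, ← huv p hp]
    rw [Finset.sum_congr rfl fun p _ => h1 p, Finset.sum_add_distrib]
    have hA : ∑ p : X × Y, (a p - b p) * u p.1 = 0 := by
      rw [Fintype.sum_prod_type]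
      apply Finset.sum_eq_zero
      intro x _
      have : ∑ y, (a (x, y) - b (x, y)) * u x = (∑ y, a (x, y) - ∑ y, b (x, y)) * u x := by
        rw [← Finset.sum_mul, Finset.sum_sub_distrib]
      simpa [this, ha.2.2.1 x, hb.2.2.1 x] using this
    have hB : ∑ p : X × Y, (a p - b p) * v p.2 = 0 := by
      rw [Fintype.sum_prod_type_right]
      apply Finset.sum_eq_zero
      intro y _
      have : ∑ x, (a (x, y) - b (x, y)) * v y = (∑ x, a (x, y) - ∑ x, b (x, y)) * v y := by
        rw [← Finset.sum_mul, Finset.sum_sub_distrib]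
      simpa [this, ha.2.2.2 y, hb.2.2.2 y] using this
    rw [hA, hB, add_zero]
  have hnn : ∀ p ∈ Finset.univ (α := X × Y), 0 ≤ (a p - b p) * F p := by
    intro p _
    by_cases hp : μ p = 0
    · obtain ⟨e1, e2⟩ := hz0 p hp
      simp [e1, e2]
    · have hμpos : 0 < μ p := lt_of_le_of_ne (hμ.1 p) (Ne.symm hp)
      simp only [hF]
      rw [if_neg hp]
      have : (a p - b p) * ((a p - b p) / μ p) = (a p - b p) ^ 2 / μ p := by ring
      rw [this]
      positivity
  have hzero := (Finset.sum_eq_zero_iff_of_nonneg hnn).mp key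
  funext p
  have hp0 := hzero p (Finset.mem_univ p)
  by_cases hp : μ p = 0
  · obtain ⟨e1, e2⟩ := hz0 p hp
    rw [e1, e2]
  · have hμpos : 0 < μ p := lt_of_le_of_ne (hμ.1 p) (Ne.symm hp)
    simp only [hF, if_neg hp] at hp0
    have : (a p - b p) ^ 2 / μ p = 0 := by rw [← hp0]; ring
    have h2 := (div_eq_zero_iff.mp this).resolve_right hp
    have := pow_eq_zero_iff (n := 2) (by norm_num) |>.mp h2
    linarith

lemma extreme_imp_good (μ₁ : X → ℝ) (μ₂ : Y → ℝ)
    (μ : X × Y → ℝ) (hμ : μ ∈ Kset G μ₁ μ₂)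
    (hext : ∀ a ∈ Kset G μ₁ μ₂,
       ∀ b ∈ Kset G μ₁ μ₂,
       μ ∈ openSegment ℝ a b → a = μ ∧ b = μ)
    (f : X × Y → ℝ) (hf : ∀ (g : G), ∀ p ∈ {p | μ p ≠ 0}, f (g • p) = f p) :
    ∃ u : X → ℝ, ∃ v : Y → ℝ,
      (∀ (g : G) (x : X), u (g • x) = u x) ∧ (∀ (g : G) (y : Y), v (g • y) = v y) ∧
      ∀ p ∈ {p | μ p ≠ 0}, f p = u p.1 + v p.2 := by
  classical
  have _i : Fintype G := Fintype.ofFinite G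
  have hcG : (0:ℝ) < Fintype.card G := by exact_mod_cast Fintype.card_pos
  have Sinv : ∀ (g : G) (p : X × Y), μ (g • p) = μ p := hμ.2.1
  by_contra hno
  -- Step A: no split at all (even non-invariant)
  have hns : ¬ ∃ (u : X → ℝ) (v : Y → ℝ), ∀ p, μ p ≠ 0 → f p = u p.1 + v p.2 := by
    rintro ⟨u, v, huv⟩
    apply hno
    refine ⟨fun x => (∑ g : G, u (g • x)) / Fintype.card G,
            fun y => (∑ g : G, v (g • y)) / Fintype.card G, ?_, ?_, ?_⟩
    · intro g₀ x
      have h : ∑ g : G, u (g • g₀ • x) = ∑ g : G, u (g • x) := calc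
        ∑ g : G, u (g • g₀ • x) = ∑ g : G, u ((g * g₀) • x) := by simp [mul_smul]
        _ = ∑ g : G, u (g • x) := Equiv.sum_comp (Equiv.mulRight g₀) (fun g => u (g • x))
      dsimp only
      rw [h]
    · intro g₀ y
      have h : ∑ g : G, v (g • g₀ • y) = ∑ g : G, v (g • y) := calc
        ∑ g : G, v (g • g₀ • y) = ∑ g : G, v ((g * g₀) • y) := by simp [mul_smul]
        _ = ∑ g : G, v (g • y) := Equiv.sum_comp (Equiv.mulRight g₀) (fun g => v (g • y))
      dsimp only
      rw [h]
    · intro p hp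
      have hsum : (∑ g : G, u (g • p.1)) + (∑ g : G, v (g • p.2)) = (Fintype.card G : ℝ) * f p := by
        rw [← Finset.sum_add_distrib]
        have : ∀ g : G, u (g • p.1) + v (g • p.2) = f p := by
          intro g
          have hgp : μ (g • p) ≠ 0 := by rw [Sinv]; exact hp
          have h1 := huv (g • p) hgp
          have h2 : f (g • p) = f p := hf g p hp
          rw [← h2, h1]
          rfl
        rw [Finset.sum_congr rfl fun g _ => this g]
        simp [Finset.sum_const, mul_comm]
      rw [← add_div, hsum]
      field_simp
  -- Step B: the linear map T and the truncated f
  set T : ((X → ℝ) × (Y → ℝ)) →ₗ[ℝ] (X × Y → ℝ) :=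
    { toFun := fun uv p => if μ p = 0 then 0 else uv.1 p.1 + uv.2 p.2
      map_add' := by
        intro a b
        funext p
        by_cases h : μ p = 0 <;> simp [h] <;> ring
      map_smul' := by
        intro c a
        funext p
        by_cases h : μ p = 0 <;> simp [h] <;> ring } with hT
  set ft : X × Y → ℝ := fun p => if μ p = 0 then 0 else f p with hftdef
  have hft : ft ∉ LinearMap.range T := by
    rintro ⟨⟨u, v⟩, huv⟩
    refine hns ⟨u, v, fun p hp => ?_⟩
    have := congrFun huv p
    simp only [hT, hftdef, LinearMap.coe_mk, AddHom.coe_mk, if_neg hp] at this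
    exact this.symm
  obtain ⟨φ, hφ1, hφ2⟩ : ∃ φ : Module.Dual ℝ (X × Y → ℝ),
      φ ∈ (LinearMap.range T).dualAnnihilator ∧ φ ft ≠ 0 := by
    by_contra hc
    push_neg at hc
    exact hft ((Subspace.forall_mem_dualAnnihilator_apply_eq_zero_iff (LinearMap.range T) ft).mp
      (fun ψ hψ => hc ψ hψ))
  have hrep : ∀ h : X × Y → ℝ, φ h = ∑ p, h p * φ (Pi.single p 1) := by
    intro h
    have hh : h = ∑ p, h p • (Pi.single p (1:ℝ) : X × Y → ℝ) := by
      funext q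
      rw [Finset.sum_apply]
      simp [Pi.single_apply]
    conv_lhs => rw [hh]
    rw [map_sum]
    simp [smul_eq_mul]
  set η : X × Y → ℝ := fun p => φ (Pi.single p 1) with hη
  set ζ' : X × Y → ℝ := fun p => if μ p = 0 then 0 else η p / μ p with hζ'
  have hζ'μ : ∀ p, ζ' p * μ p = if μ p = 0 then 0 else η p := by
    intro p
    by_cases h : μ p = 0
    · simp [hζ', h]
    · simp only [hζ', if_neg h]
      exact div_mul_cancel₀ _ h
  have hrow : ∀ x, ∑ y, ζ' (x, y) * μ (x, y) = 0 := by
    intro x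
    have h0 : φ (T (Pi.single x 1, 0)) = 0 :=
      (Submodule.mem_dualAnnihilator φ).mp hφ1 _ ⟨_, rfl⟩
    rw [hrep] at h0
    have hts : ∑ p : X × Y, (T (Pi.single x 1, 0)) p * η p
        = ∑ y, ζ' (x, y) * μ (x, y) := by
      rw [Fintype.sum_prod_type]
      rw [Finset.sum_eq_single_of_mem x (Finset.mem_univ x)]
      · refine Finset.sum_congr rfl fun y _ => ?_
        rw [hζ'μ]
        by_cases h : μ (x, y) = 0 <;> simp [hT, h]
      · intro x' _ hx'
        apply Finset.sum_eq_zero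
        intro y _
        by_cases h : μ (x', y) = 0 <;> simp [hT, h, Pi.single_apply, hx']
    rw [← hts, h0]
  have hcol : ∀ y, ∑ x, ζ' (x, y) * μ (x, y) = 0 := by
    intro y
    have h0 : φ (T (0, Pi.single y 1)) = 0 :=
      (Submodule.mem_dualAnnihilator φ).mp hφ1 _ ⟨_, rfl⟩
    rw [hrep] at h0
    have hts : ∑ p : X × Y, (T (0, Pi.single y 1)) p * η p
        = ∑ x, ζ' (x, y) * μ (x, y) := by
      rw [Fintype.sum_prod_type_right]
      rw [Finset.sum_eq_single_of_mem y (Finset.mem_univ y)]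
      · refine Finset.sum_congr rfl fun x _ => ?_
        rw [hζ'μ]
        by_cases h : μ (x, y) = 0 <;> simp [hT, h]
      · intro y' _ hy'
        apply Finset.sum_eq_zero
        intro x _
        by_cases h : μ (x, y') = 0 <;> simp [hT, h, Pi.single_apply, hy']
    rw [← hts, h0]
  -- Step C: average ζ' over G
  set ζ : X × Y → ℝ := fun p => (∑ g : G, ζ' (g • p)) / Fintype.card G with hζ
  have hζinv : ∀ (g₀ : G) (p : X × Y), ζ (g₀ • p) = ζ p := by
    intro g₀ p
    simp only [hζ]
    congr 1
    calc ∑ g : G, ζ' (g • g₀ • p) = ∑ g : G, ζ' ((g * g₀) • p) := by simp [mul_smul]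
      _ = ∑ g : G, ζ' (g • p) := Equiv.sum_comp (Equiv.mulRight g₀) (fun g => ζ' (g • p))
  have hrowζ : ∀ x, ∑ y, ζ (x, y) * μ (x, y) = 0 := by
    intro x
    have hg : ∀ g : G, ∑ y, ζ' (g • x, g • y) * μ (x, y) = 0 := by
      intro g
      calc ∑ y, ζ' (g • x, g • y) * μ (x, y)
          = ∑ y, ζ' (g • x, g • y) * μ (g • x, g • y) := by
            refine Finset.sum_congr rfl fun y _ => ?_
            rw [← Sinv g (x, y)]
            rfl
        _ = ∑ y, ζ' (g • x, y) * μ (g • x, y) :=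
            Equiv.sum_comp (MulAction.toPerm g) (fun y => ζ' (g • x, y) * μ (g • x, y))
        _ = 0 := hrow (g • x)
    calc ∑ y, ζ (x, y) * μ (x, y)
        = ∑ y, (∑ g : G, ζ' (g • x, g • y) * μ (x, y)) / Fintype.card G := by
          refine Finset.sum_congr rfl fun y _ => ?_
          rw [hζ, div_mul_eq_mul_div, Finset.sum_mul]
          rfl
      _ = (∑ g : G, ∑ y, ζ' (g • x, g • y) * μ (x, y)) / Fintype.card G := by
          rw [← Finset.sum_div, Finset.sum_comm]
      _ = 0 := by
          rw [Finset.sum_congr rfl fun g _ => hg g]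
          simp
  have hcolζ : ∀ y, ∑ x, ζ (x, y) * μ (x, y) = 0 := by
    intro y
    have hg : ∀ g : G, ∑ x, ζ' (g • x, g • y) * μ (x, y) = 0 := by
      intro g
      calc ∑ x, ζ' (g • x, g • y) * μ (x, y)
          = ∑ x, ζ' (g • x, g • y) * μ (g • x, g • y) := by
            refine Finset.sum_congr rfl fun x _ => ?_
            rw [← Sinv g (x, y)]
            rfl
        _ = ∑ x, ζ' (x, g • y) * μ (x, g • y) :=
            Equiv.sum_comp (MulAction.toPerm g) (fun x => ζ' (x, g • y) * μ (x, g • y))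
        _ = 0 := hcol (g • y)
    calc ∑ x, ζ (x, y) * μ (x, y)
        = ∑ x, (∑ g : G, ζ' (g • x, g • y) * μ (x, y)) / Fintype.card G := by
          refine Finset.sum_congr rfl fun x _ => ?_
          rw [hζ, div_mul_eq_mul_div, Finset.sum_mul]
          rfl
      _ = (∑ g : G, ∑ x, ζ' (g • x, g • y) * μ (x, y)) / Fintype.card G := by
          rw [← Finset.sum_div, Finset.sum_comm]
      _ = 0 := by
          rw [Finset.sum_congr rfl fun g _ => hg g]
          simp
  -- Step D: ζ is nonzero somewhere on the support
  have hft_inv : ∀ (g : G) (p : X × Y), ft (g • p) = ft p := by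
    intro g p
    by_cases h : μ p = 0
    · simp [hftdef, Sinv g p, h]
    · simp only [hftdef, Sinv g p, if_neg h]
      exact hf g p h
  have hpair : ∑ p, ζ p * μ p * ft p = φ ft := by
    have h1 : ∀ g : G, ∑ p, ζ' (g • p) * μ p * ft p = φ ft := by
      intro g
      calc ∑ p, ζ' (g • p) * μ p * ft p
          = ∑ p, ζ' (g • p) * μ (g • p) * ft (g • p) := by
            refine Finset.sum_congr rfl fun p _ => ?_
            rw [Sinv g p, hft_inv g p]
        _ = ∑ p, ζ' p * μ p * ft p :=
            Equiv.sum_comp (MulAction.toPerm g) (fun p => ζ' p * μ p * ft p)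
        _ = ∑ p, ft p * η p := by
            refine Finset.sum_congr rfl fun p _ => ?_
            rw [hζ'μ]
            by_cases h : μ p = 0 <;> simp [hftdef, h] <;> ring
        _ = φ ft := (hrep ft).symm
    calc ∑ p, ζ p * μ p * ft p
        = ∑ p, (∑ g : G, ζ' (g • p) * μ p * ft p) / Fintype.card G := by
          refine Finset.sum_congr rfl fun p _ => ?_
          rw [hζ, div_mul_eq_mul_div, div_mul_eq_mul_div, Finset.sum_mul, Finset.sum_mul]
      _ = (∑ g : G, ∑ p, ζ' (g • p) * μ p * ft p) / Fintype.card G := by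
          rw [← Finset.sum_div, Finset.sum_comm]
      _ = φ ft := by
          rw [Finset.sum_congr rfl fun g _ => h1 g, Finset.sum_const, Finset.card_univ,
            nsmul_eq_mul, mul_div_cancel_left₀ _ hcG.ne']
  obtain ⟨p₀, hp₀⟩ : ∃ p, ζ p * μ p * ft p ≠ 0 := by
    by_contra hc
    push_neg at hc
    rw [Finset.sum_eq_zero fun p _ => hc p] at hpair
    exact hφ2 hpair.symm
  have hζp₀ : ζ p₀ ≠ 0 := fun h => hp₀ (by rw [h]; ring)
  have hμp₀ : μ p₀ ≠ 0 := fun h => hp₀ (by rw [h]; ring)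
  -- Step E: perturbation
  set C : ℝ := ∑ p, |ζ p| + 1 with hCdef
  have hC : 0 < C := by positivity
  have hbound : ∀ p, |ζ p| ≤ C := by
    intro p
    have h1 : |ζ p| ≤ ∑ q, |ζ q| :=
      Finset.single_le_sum (fun q _ => abs_nonneg (ζ q)) (Finset.mem_univ p)
    linarith
  have hfact : ∀ p (σ : ℝ), |σ| = 1 → 0 ≤ 1 + σ * (ζ p / C) := by
    intro p σ hσ
    have h1 := hbound p
    have h2 := abs_le.mp h1
    have h3 : |σ * (ζ p / C)| ≤ 1 := by
      rw [abs_mul, hσ, one_mul, abs_div, abs_of_pos hC, div_le_one hC]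
      exact h1
    have := abs_le.mp h3
    linarith
  set A : X × Y → ℝ := fun p => μ p * (1 + ζ p / C) with hA
  set B : X × Y → ℝ := fun p => μ p * (1 - ζ p / C) with hB
  have hmarg : ∀ (σ : ℝ), (∀ x, ∑ y, μ (x, y) * (1 + σ * (ζ (x, y) / C)) = μ₁ x) ∧
      (∀ y, ∑ x, μ (x, y) * (1 + σ * (ζ (x, y) / C)) = μ₂ y) := by
    intro σ
    constructor
    · intro x
      calc ∑ y, μ (x, y) * (1 + σ * (ζ (x, y) / C))
          = ∑ y, (μ (x, y) + σ / C * (ζ (x, y) * μ (x, y))) := by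
            refine Finset.sum_congr rfl fun y _ => ?_; ring
        _ = μ₁ x + σ / C * ∑ y, ζ (x, y) * μ (x, y) := by
            rw [Finset.sum_add_distrib, hμ.2.2.1 x, ← Finset.mul_sum]
        _ = μ₁ x := by rw [hrowζ x]; ring
    · intro y
      calc ∑ x, μ (x, y) * (1 + σ * (ζ (x, y) / C))
          = ∑ x, (μ (x, y) + σ / C * (ζ (x, y) * μ (x, y))) := by
            refine Finset.sum_congr rfl fun x _ => ?_; ring
        _ = μ₂ y + σ / C * ∑ x, ζ (x, y) * μ (x, y) := by
            rw [Finset.sum_add_distrib, hμ.2.2.2 y, ← Finset.mul_sum]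
        _ = μ₂ y := by rw [hcolζ y]; ring
  have hAK : A ∈ Kset G μ₁ μ₂ := by
    refine ⟨?_, ?_, ?_, ?_⟩
    · intro p
      exact mul_nonneg (hμ.1 p) (by simpa using hfact p 1 (by norm_num))
    · intro g p
      simp only [hA]
      rw [Sinv g p, hζinv g p]
    · intro x
      have := (hmarg 1).1 x
      simpa using this
    · intro y
      have := (hmarg 1).2 y
      simpa using this
  have hBK : B ∈ Kset G μ₁ μ₂ := by
    refine ⟨?_, ?_, ?_, ?_⟩
    · intro p
      have := hfact p (-1) (by norm_num)
      refine mul_nonneg (hμ.1 p) ?_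
      have h : (1 : ℝ) + (-1) * (ζ p / C) = 1 - ζ p / C := by ring
      rw [h] at this
      exact this
    · intro g p
      simp only [hB]
      rw [Sinv g p, hζinv g p]
    · intro x
      have := (hmarg (-1)).1 x
      calc ∑ y, B (x, y) = ∑ y, μ (x, y) * (1 + (-1) * (ζ ((x, y)) / C)) := by
            refine Finset.sum_congr rfl fun y _ => ?_
            simp only [hB]; ring
        _ = μ₁ x := this
    · intro y
      have := (hmarg (-1)).2 y
      calc ∑ x, B (x, y) = ∑ x, μ (x, y) * (1 + (-1) * (ζ ((x, y)) / C)) := by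
            refine Finset.sum_congr rfl fun x _ => ?_
            simp only [hB]; ring
        _ = μ₂ y := this
  have hseg : μ ∈ openSegment ℝ A B := by
    refine ⟨1/2, 1/2, by norm_num, by norm_num, by norm_num, ?_⟩
    funext p
    simp only [Pi.add_apply, Pi.smul_apply, smul_eq_mul, hA, hB]
    ring
  have hAeq := (hext A hAK B hBK hseg).1
  have hAp := congrFun hAeq p₀
  simp only [hA] at hAp
  apply hζp₀
  have h1 : μ p₀ * (ζ p₀ / C) = 0 := by linarith [hAp, mul_one (μ p₀)]
  rcases mul_eq_zero.mp h1 with h | h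
  · exact absurd h hμp₀
  · rcases div_eq_zero_iff.mp h with h' | h'
    · exact h'
    · exact absurd h' hC.ne'

end Aux

theorem stmt_13 {G X Y : Type*} [Group G] [Finite G] [Fintype X] [Fintype Y]
    [MulAction G X] [MulAction G Y]
    (μ₁ : X → ℝ) (μ₂ : Y → ℝ)
    (h₁pos : ∀ x, 0 < μ₁ x) (h₂pos : ∀ y, 0 < μ₂ y)
    (h₁sum : ∑ x, μ₁ x = 1) (h₂sum : ∑ y, μ₂ y = 1)
    (h₁inv : ∀ (g : G) (x : X), μ₁ (g • x) = μ₁ x)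
    (h₂inv : ∀ (g : G) (y : Y), μ₂ (g • y) = μ₂ y)
    (μ : X × Y → ℝ) (hμ : μ ∈ Kset G μ₁ μ₂) :
    μ ∈ Set.extremePoints ℝ (Kset G μ₁ μ₂) ↔ IsGGood G {p | μ p ≠ 0} := by
  constructor
  · intro hext
    refine ⟨fun g p hp => ?_, fun f hf => ?_⟩
    · simp only [Set.mem_setOf_eq] at hp ⊢
      rw [hμ.2.1 g p]
      exact hp
    · exact extreme_imp_good μ₁ μ₂ μ hμ (fun a ha b hb hs => ⟨hext.2 ha hb hs, hext.2 hb ha (by rw [openSegment_symm]; exact hs)⟩) f hf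
  · exact good_imp_extreme μ₁ μ₂ μ hμ
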